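/- Let M = [[A,B],[C,Aᵀ]] ∈ Sp^𝓘(4) with A having a real eigenvalue μ with |μ| < 1. Then λ = μ + i√(1-μ²) is an eigenvalue of M (as a complex matrix), and |λ| = 1. -/

import Mathlib

open Matrix

lemma my_eval_charpoly {n : Type*} [Fintype n] [DecidableEq n] {R : Type*} [CommRing R]
    (M : Matrix n n R) (t : R) :
    M.charpoly.eval t = (t • (1 : Matrix n n R) - M).det := by
  rw [Matrix.charpoly, eval_det, Matrix.matPolyEquiv_charmatrix]
  congr 1
  rw [Polynomial.eval_sub, Polynomial.eval_X, Polynomial.eval_C, Matrix.scalar_apply,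
    Matrix.smul_one_eq_diagonal]

theorem stmt_15 (A B C : Matrix (Fin 2) (Fin 2) ℝ)
    (hB : Bᵀ = B) (hC : Cᵀ = C)
    (hAB : A * B = B * Aᵀ) (hAC : Aᵀ * C = C * A)
    (hABC : A * A - B * C = 1)
    (μ : ℝ) (hμ : |μ| < 1)
    (heig : ∃ v : Fin 2 → ℝ, v ≠ 0 ∧ A.mulVec v = μ • v) :
    let lam : ℂ := μ + Real.sqrt (1 - μ ^ 2) * Complex.I
    ‖lam‖ = 1 ∧
    ((fromBlocks A B C Aᵀ).map (Complex.ofReal)).charpoly.eval lam = 0 := by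
  intro lam
  have hμ2 : (0:ℝ) < 1 - μ ^ 2 := by
    have := abs_lt.mp hμ
    nlinarith
  set s : ℝ := Real.sqrt (1 - μ ^ 2) with hs
  have hs2 : s ^ 2 = 1 - μ ^ 2 := Real.sq_sqrt hμ2.le
  have hspos : 0 < s := Real.sqrt_pos.mpr hμ2
  have habs : ‖lam‖ = 1 := by
    have hre : lam.re = μ := by simp [lam]
    have him : lam.im = s := by simp [lam, hs]
    have hnormSq : Complex.normSq lam = 1 := by
      rw [Complex.normSq_apply, hre, him]
      nlinarith
    rw [Complex.norm_def, hnormSq, Real.sqrt_one]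
  refine ⟨habs, ?_⟩
  -- key quadratic relation
  have hlam : lam ^ 2 + 1 = 2 * μ * lam := by
    have : lam ^ 2 = (μ^2 - s^2 : ℝ) + (2*μ*s : ℝ) * Complex.I := by
      simp only [lam]
      push_cast
      ring_nf
      rw [Complex.I_sq]
      push_cast
      ring
    rw [this]
    have : (μ^2 - s^2 : ℝ) = 2*μ*μ - 1 := by nlinarith
    rw [this]
    simp only [lam]
    push_cast
    ring
  -- eigenvector of Aᵀ
  obtain ⟨v, hv, hAv⟩ := heig
  have hdet : (A - μ • 1).det = 0 := by
    rw [← Matrix.exists_mulVec_eq_zero_iff]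
    refine ⟨v, hv, ?_⟩
    rw [Matrix.sub_mulVec, hAv, Matrix.smul_mulVec, Matrix.one_mulVec, sub_self]
  obtain ⟨u, hu, hAu⟩ : ∃ u : Fin 2 → ℝ, u ≠ 0 ∧ (Aᵀ - μ • 1) *ᵥ u = 0 := by
    rw [Matrix.exists_mulVec_eq_zero_iff]
    rw [show Aᵀ - μ • 1 = (A - μ • 1)ᵀ by simp [Matrix.transpose_smul]]
    rw [Matrix.det_transpose]
    exact hdet
  have hAu' : Aᵀ *ᵥ u = μ • u := by
    have := hAu
    rw [Matrix.sub_mulVec, Matrix.smul_mulVec, Matrix.one_mulVec, sub_eq_zero] at this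
    exact this
  -- complexification
  set f : ℝ →+* ℂ := Complex.ofRealHom
  set Ac : Matrix (Fin 2) (Fin 2) ℂ := A.map f with hAc
  set Bc : Matrix (Fin 2) (Fin 2) ℂ := B.map f with hBc
  set Cc : Matrix (Fin 2) (Fin 2) ℂ := C.map f with hCc
  set uc : Fin 2 → ℂ := fun i => (u i : ℂ) with huc
  have hmap_mul : ∀ X Y : Matrix (Fin 2) (Fin 2) ℝ, (X * Y).map f = X.map f * Y.map f :=
    fun X Y => Matrix.map_mul
  have hABc : Ac * Bc = Bc * Acᵀ := by
    rw [hAc, hBc, ← Matrix.transpose_map, ← hmap_mul, ← hmap_mul, hAB]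
  have hCBc : Cc * Bc = Acᵀ * Acᵀ - 1 := by
    have h1 : C * B = Aᵀ * Aᵀ - 1 := by
      have h := congrArg Matrix.transpose hABC
      rw [Matrix.transpose_sub, Matrix.transpose_mul, Matrix.transpose_mul, hB, hC,
        Matrix.transpose_one] at h
      rw [sub_eq_iff_eq_add.mp h]
      abel
    have ht : Aᵀ.map ⇑f = Acᵀ := by rw [hAc, Matrix.transpose_map]
    rw [hCc, hBc, ← hmap_mul, h1, Matrix.map_sub _ (map_sub f), hmap_mul, ht]
    congr 1
    exact Matrix.map_one _ (map_zero f) (map_one f)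
  have hAuc : Acᵀ *ᵥ uc = (μ : ℂ) • uc := by
    ext i
    have := congrFun hAu' i
    simp only [Matrix.mulVec, dotProduct, Pi.smul_apply, smul_eq_mul] at this ⊢
    rw [hAc, ← Matrix.transpose_map]
    simp only [Matrix.map_apply, huc]
    rw [show ⇑f = Complex.ofReal from rfl]
    exact_mod_cast this
  -- the eigenvector of the big matrix
  set w : Fin 2 ⊕ Fin 2 → ℂ := Sum.elim (Bc *ᵥ uc) ((lam • 1 - Acᵀ) *ᵥ uc) with hw
  have hMc : (fromBlocks A B C Aᵀ).map Complex.ofReal = fromBlocks Ac Bc Cc Acᵀ := by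
    ext i j
    rcases i with i | i <;> rcases j with j | j <;> rfl
  rw [my_eval_charpoly, hMc]
  rw [← Matrix.exists_mulVec_eq_zero_iff]
  refine ⟨w, ?_, ?_⟩
  · -- w ≠ 0
    intro hw0
    apply hu
    have h2 : (lam • 1 - Acᵀ) *ᵥ uc = 0 := by
      funext i
      exact congrFun (congrArg (fun g => g ∘ Sum.inr) hw0) i
    rw [Matrix.sub_mulVec, Matrix.smul_mulVec, Matrix.one_mulVec, hAuc, sub_eq_zero] at h2
    have hlmμ : lam ≠ (μ : ℂ) := by
      intro h
      have : lam.im = (μ:ℂ).im := by rw [h]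
      simp [lam] at this
      exact hspos.ne' this
    funext i
    have := congrFun h2 i
    simp only [Pi.smul_apply, smul_eq_mul] at this
    have : (lam - (μ:ℂ)) * uc i = 0 := by linear_combination this
    rcases mul_eq_zero.mp this with h | h
    · exact absurd (sub_eq_zero.mp h) hlmμ
    · simpa [huc, Complex.ofReal_eq_zero] using h
  · -- (lam • 1 - M) *ᵥ w = 0
    have hsplit : lam • (1 : Matrix (Fin 2 ⊕ Fin 2) (Fin 2 ⊕ Fin 2) ℂ) -
        fromBlocks Ac Bc Cc Acᵀ =
        fromBlocks (lam • 1 - Ac) (-Bc) (-Cc) (lam • 1 - Acᵀ) := by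
      ext i j
      rcases i with i | i <;> rcases j with j | j <;>
        simp [Matrix.fromBlocks, Matrix.one_apply, Matrix.smul_apply, Matrix.sub_apply]
    rw [hsplit, hw, Matrix.fromBlocks_mulVec]
    simp only [Sum.elim_comp_inl, Sum.elim_comp_inr]
    have e1 : (lam • 1 - Ac) *ᵥ (Bc *ᵥ uc) + (-Bc) *ᵥ ((lam • 1 - Acᵀ) *ᵥ uc) = 0 := by
      rw [Matrix.mulVec_mulVec, Matrix.mulVec_mulVec, ← Matrix.add_mulVec]
      have : (lam • 1 - Ac) * Bc + (-Bc) * (lam • 1 - Acᵀ) = 0 := by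
        rw [Matrix.sub_mul, Matrix.neg_mul, Matrix.mul_sub, Matrix.smul_mul, Matrix.one_mul,
          Matrix.mul_smul, Matrix.mul_one, hABc]
        abel
      rw [this, Matrix.zero_mulVec]
    have e2 : (-Cc) *ᵥ (Bc *ᵥ uc) + (lam • 1 - Acᵀ) *ᵥ ((lam • 1 - Acᵀ) *ᵥ uc) = 0 := by
      rw [Matrix.mulVec_mulVec, Matrix.mulVec_mulVec, ← Matrix.add_mulVec]
      have key : (-Cc) * Bc + (lam • 1 - Acᵀ) * (lam • 1 - Acᵀ) =
          (2 * lam) • ((μ : ℂ) • 1 - Acᵀ) := by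
        rw [Matrix.neg_mul, hCBc]
        have h1a : (lam • (1 : Matrix (Fin 2) (Fin 2) ℂ)) * (lam • 1) = lam ^ 2 • 1 := by
          rw [Matrix.smul_mul, Matrix.mul_smul, Matrix.one_mul, smul_smul, pow_two]
        have h1b : (lam • (1 : Matrix (Fin 2) (Fin 2) ℂ)) * Acᵀ = lam • Acᵀ := by
          rw [Matrix.smul_mul, Matrix.one_mul]
        have h1c : Acᵀ * (lam • (1 : Matrix (Fin 2) (Fin 2) ℂ)) = lam • Acᵀ := by
          rw [Matrix.mul_smul, Matrix.mul_one]
        have expand : (lam • 1 - Acᵀ) * (lam • 1 - Acᵀ) =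
            (lam ^ 2) • (1 : Matrix (Fin 2) (Fin 2) ℂ) - (2 * lam) • Acᵀ + Acᵀ * Acᵀ := by
          rw [Matrix.sub_mul, Matrix.mul_sub, Matrix.mul_sub, h1a, h1b, h1c]
          module
        rw [expand]
        have h1 : (lam ^ 2) • (1 : Matrix (Fin 2) (Fin 2) ℂ) + 1 =
            (2 * μ * lam) • (1 : Matrix (Fin 2) (Fin 2) ℂ) := by
          rw [← hlam, add_smul, one_smul]
        have h2 : (2 * lam) * (μ : ℂ) = 2 * μ * lam := by ring
        rw [smul_sub, smul_smul, h2, ← h1]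
        abel
      have hker : ((μ : ℂ) • 1 - Acᵀ) *ᵥ uc = 0 := by
        rw [Matrix.sub_mulVec, Matrix.smul_mulVec, Matrix.one_mulVec, hAuc, sub_self]
      rw [key, Matrix.smul_mulVec, hker, smul_zero]
    rw [e1, e2]
    funext i
    rcases i with i | i <;> rfl
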